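/- Let E be a finite-dimensional real vector space, M ⊆ E a convex polytope with nonempty interior, and f : M → E a C¹ stratified vector field (f(x) ∈ E(x) := span(M(x)−x) for all x, where M(x) is the smallest face containing x) with sup_{x∈M} ‖f'(x)‖_op < 1. Then φ := id_M + f is a face-respecting homeomorphism of M: φ is a bijection of M onto M with continuous inverse, and φ(F) = F for every face F of M. -/

import Mathlib

open Set

/-- A convex polytope: the convex hull of a finite set. -/
def IsPolytope (n : ℕ) (M : Set (Fin n → ℝ)) : Prop :=
  ∃ S : Finset (Fin n → ℝ), M = convexHull ℝ (S : Set (Fin n → ℝ))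

/-- A face of `M`: a convex extreme subset of `M`. -/
def IsFaceOf (n : ℕ) (M F : Set (Fin n → ℝ)) : Prop :=
  Convex ℝ F ∧ IsExtreme ℝ M F

/-- The smallest face of `M` containing `x`: the intersection of all faces containing `x`. -/
def smallestFace (n : ℕ) (M : Set (Fin n → ℝ)) (x : Fin n → ℝ) : Set (Fin n → ℝ) :=
  ⋂₀ {F | IsFaceOf n M F ∧ x ∈ F}

/-- `E(x) := span_ℝ (M(x) - x)`, where `M(x)` is the smallest face of `M` containing `x`. -/
def spanAt (n : ℕ) (M : Set (Fin n → ℝ)) (x : Fin n → ℝ) : Submodule ℝ (Fin n → ℝ) :=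
  Submodule.span ℝ ((fun y => y - x) '' smallestFace n M x)

/-- dimension of a set: the dimension of its affine hull. -/
noncomputable def setDim (n : ℕ) (F : Set (Fin n → ℝ)) : ℕ :=
  Module.finrank ℝ (vectorSpan ℝ F)

/-- The stratum `∂_i(M)` of points of index `i`, i.e. whose smallest containing face
has dimension `n - i`. -/
def stratum (n : ℕ) (M : Set (Fin n → ℝ)) (i : ℕ) : Set (Fin n → ℝ) :=
  {x ∈ M | setDim n (smallestFace n M x) = n - i}

variable {n : ℕ}

private lemma aux_mem_relint {F : Set (Fin n → ℝ)} {z : Fin n → ℝ} :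
    z ∈ intrinsicInterior ℝ F ↔ z ∈ affineSpan ℝ F ∧
      ∃ ε > 0, ∀ y ∈ (affineSpan ℝ F : Set (Fin n → ℝ)), dist y z < ε → y ∈ F := by
  constructor
  · rintro ⟨⟨z, hzA⟩, hz, rfl⟩
    refine ⟨hzA, ?_⟩
    rw [mem_interior_iff_mem_nhds, Metric.mem_nhds_iff] at hz
    obtain ⟨ε, hε, hball⟩ := hz
    refine ⟨ε, hε, fun y hy hd => ?_⟩
    exact hball (show (⟨y, hy⟩ : affineSpan ℝ F) ∈ Metric.ball _ _ by
      simp only [Metric.mem_ball, Subtype.dist_eq]; exact hd)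
  · rintro ⟨hzA, ε, hε, h⟩
    refine ⟨⟨z, hzA⟩, ?_, rfl⟩
    rw [mem_interior_iff_mem_nhds, Metric.mem_nhds_iff]
    refine ⟨ε, hε, ?_⟩
    rintro ⟨y, hy⟩ hd
    exact h y hy (by simpa [Metric.mem_ball, Subtype.dist_eq] using hd)

private lemma aux_face_self {F : Set (Fin n → ℝ)} (h : Convex ℝ F) : IsFaceOf n F F :=
  ⟨h, IsExtreme.rfl⟩

private lemma aux_smallestFace_isFace {F : Set (Fin n → ℝ)} (hF : Convex ℝ F) {x}
    (hx : x ∈ F) : IsFaceOf n F (smallestFace n F x) ∧ x ∈ smallestFace n F x := by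
  have hne : {G | IsFaceOf n F G ∧ x ∈ G}.Nonempty := ⟨F, aux_face_self hF, hx⟩
  exact ⟨⟨convex_sInter fun G hG => hG.1.1, isExtreme_sInter hne fun G hG => hG.1.2⟩,
    mem_sInter.2 fun G hG => hG.2⟩

private lemma aux_smallestFace_subset {F G : Set (Fin n → ℝ)} (hG : IsFaceOf n F G) {x}
    (hx : x ∈ G) : smallestFace n F x ⊆ G := sInter_subset_of_mem ⟨hG, hx⟩

private lemma aux_trans {F G H : Set (Fin n → ℝ)} (h1 : IsFaceOf n F G)
    (h2 : IsFaceOf n G H) : IsFaceOf n F H := ⟨h2.1, h1.2.trans h2.2⟩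

private lemma aux_smallestFace_mono {F G : Set (Fin n → ℝ)} (hG : IsFaceOf n F G) {x}
    (hx : x ∈ G) : smallestFace n F x ⊆ smallestFace n G x :=
  subset_sInter fun H hH => sInter_subset_of_mem ⟨aux_trans hG hH.1, hH.2⟩

private lemma aux_spanAt_mono {F G : Set (Fin n → ℝ)} (hG : IsFaceOf n F G) {x}
    (hx : x ∈ G) : spanAt n F x ≤ spanAt n G x :=
  Submodule.span_mono (image_mono (aux_smallestFace_mono hG hx))

private lemma aux_spanAt_le {F : Set (Fin n → ℝ)} (hF : Convex ℝ F) {x} (hx : x ∈ F) :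
    spanAt n F x ≤ vectorSpan ℝ F := by
  apply Submodule.span_le.2
  rintro _ ⟨y, hy, rfl⟩
  have hyF : y ∈ F := (aux_smallestFace_isFace hF hx).1.2.1 hy
  exact vsub_mem_vectorSpan ℝ hyF hx
private lemma aux_eq_of_mem_relint {F G : Set (Fin n → ℝ)} (hG : IsExtreme ℝ F G) {x}
    (hxG : x ∈ G) (hxr : x ∈ intrinsicInterior ℝ F) : F ⊆ G := by
  intro w hw
  obtain ⟨hxA, ε, hε, hball⟩ := aux_mem_relint.1 hxr
  have hxF : x ∈ F := hG.1 hxG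
  set η : ℝ := ε / (2 * dist x w + 1) with hηdef
  have hη0 : 0 < η := div_pos hε (by positivity)
  have hw' : x + η • (x - w) ∈ F := by
    apply hball
    · have hdir : η • (x - w) ∈ (affineSpan ℝ F).direction := by
        apply Submodule.smul_mem
        rw [direction_affineSpan]
        exact vsub_mem_vectorSpan ℝ hxF hw
      have := AffineSubspace.vadd_mem_of_mem_direction hdir (subset_affineSpan ℝ F hxF)
      simpa [vadd_eq_add, add_comm] using this
    · have : dist (x + η • (x - w)) x = η * dist x w := by
        rw [dist_eq_norm, add_sub_cancel_left, norm_smul, Real.norm_eq_abs,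
          abs_of_pos hη0, dist_eq_norm]
      rw [this, hηdef, div_mul_eq_mul_div, div_lt_iff₀ (by positivity)]
      nlinarith [dist_nonneg (x := x) (y := w), hε]
  have hseg : x ∈ openSegment ℝ w (x + η • (x - w)) := by
    have h1 : (1 : ℝ) + η ≠ 0 := by positivity
    refine ⟨η / (1 + η), 1 / (1 + η), by positivity, by positivity,
      by rw [← add_div, add_comm η 1, div_self h1], ?_⟩
    match_scalars <;> field_simp <;> ring
  exact hG.2 hw hw' hxG hseg

private lemma aux_chart_interior {D : Set (Fin n → ℝ)} {x : Fin n → ℝ} (hx : x ∈ D)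
    (v : ↥(vectorSpan ℝ D)) (hv : x + ↑v ∈ intrinsicInterior ℝ D) :
    v ∈ interior {w : ↥(vectorSpan ℝ D) | x + ↑w ∈ D} := by
  obtain ⟨hA, ε, hε, hball⟩ := aux_mem_relint.1 hv
  rw [mem_interior_iff_mem_nhds, Metric.mem_nhds_iff]
  refine ⟨ε, hε, fun u hu => ?_⟩
  rw [Metric.mem_ball, Subtype.dist_eq] at hu
  apply hball
  · have hdir : (u : Fin n → ℝ) ∈ (affineSpan ℝ D).direction := by
      rw [direction_affineSpan]; exact u.2
    have := AffineSubspace.vadd_mem_of_mem_direction hdir (subset_affineSpan ℝ D hx)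
    simpa [vadd_eq_add, add_comm] using this
  · rw [dist_eq_norm]
    have : x + ↑u - (x + ↑v) = (u : Fin n → ℝ) - ↑v := by abel
    rw [this, ← dist_eq_norm]
    exact hu

private lemma aux_chart_relint {D : Set (Fin n → ℝ)} {x : Fin n → ℝ} (hx : x ∈ D)
    (v : ↥(vectorSpan ℝ D)) (hv : v ∈ interior {w : ↥(vectorSpan ℝ D) | x + ↑w ∈ D}) :
    x + ↑v ∈ intrinsicInterior ℝ D := by
  rw [mem_interior_iff_mem_nhds, Metric.mem_nhds_iff] at hv
  obtain ⟨ε, hε, hball⟩ := hv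
  rw [aux_mem_relint]
  have hxvA : x + ↑v ∈ affineSpan ℝ D := by
    have hdir : (v : Fin n → ℝ) ∈ (affineSpan ℝ D).direction := by
      rw [direction_affineSpan]; exact v.2
    have := AffineSubspace.vadd_mem_of_mem_direction hdir (subset_affineSpan ℝ D hx)
    simpa [vadd_eq_add, add_comm] using this
  refine ⟨hxvA, ε, hε, fun y hy hd => ?_⟩
  have hyx : y - x ∈ vectorSpan ℝ D := by
    rw [← direction_affineSpan]
    exact AffineSubspace.vsub_mem_direction hy (subset_affineSpan ℝ D hx)
  have hmem : (⟨y - x, hyx⟩ : ↥(vectorSpan ℝ D)) ∈ Metric.ball v ε := by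
    rw [Metric.mem_ball, Subtype.dist_eq, dist_eq_norm]
    have : y - x - (v : Fin n → ℝ) = y - (x + ↑v) := by abel
    rw [this, ← dist_eq_norm]
    exact hd
  have := hball hmem
  simpa using this

private lemma aux_chart_convex {D : Set (Fin n → ℝ)} (hD : Convex ℝ D) {x : Fin n → ℝ} :
    Convex ℝ {w : ↥(vectorSpan ℝ D) | x + ↑w ∈ D} := by
  intro a ha b hb p q hp hq hpq
  show x + ↑(p • a + q • b) ∈ D
  have : x + ↑(p • a + q • b) = p • (x + ↑a) + q • (x + ↑b) := by
    push_cast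
    match_scalars <;> simp [hpq] <;> ring
  rw [this]
  exact hD ha hb hp hq hpq

private lemma aux_combo {D : Set (Fin n → ℝ)} (hD : Convex ℝ D) {x y : Fin n → ℝ}
    (hx : x ∈ intrinsicInterior ℝ D) (hy : y ∈ closure D) {t : ℝ} (ht0 : 0 ≤ t)
    (ht1 : t < 1) : x + t • (y - x) ∈ D := by
  have hxD : x ∈ D := intrinsicInterior_subset hx
  set s : Set ↥(vectorSpan ℝ D) := {w | x + ↑w ∈ D} with hsdef
  have hsconv : Convex ℝ s := aux_chart_convex hD
  haveI : Nonempty ↥(affineSpan ℝ D) := ⟨⟨x, subset_affineSpan ℝ D hxD⟩⟩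
  have h0 : (0 : ↥(vectorSpan ℝ D)) ∈ interior s := by
    apply aux_chart_interior hxD
    rw [ZeroMemClass.coe_zero, add_zero]
    exact hx
  have hspan_closed : IsClosed (affineSpan ℝ D : Set (Fin n → ℝ)) :=
    AffineSubspace.closed_of_finiteDimensional _
  have hyA : y ∈ affineSpan ℝ D := closure_minimal (subset_affineSpan ℝ D) hspan_closed hy
  have hyx : y - x ∈ vectorSpan ℝ D := by
    rw [← direction_affineSpan]
    exact AffineSubspace.vsub_mem_direction hyA (subset_affineSpan ℝ D hxD)
  have hycl : (⟨y - x, hyx⟩ : ↥(vectorSpan ℝ D)) ∈ closure s := by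
    obtain ⟨u, hu, hut⟩ := mem_closure_iff_seq_limit.1 hy
    apply mem_closure_iff_seq_limit.2
    refine ⟨fun k => ⟨u k - x, ?_⟩, fun k => ?_, ?_⟩
    · rw [← direction_affineSpan]
      exact AffineSubspace.vsub_mem_direction (subset_affineSpan ℝ D (hu k))
        (subset_affineSpan ℝ D hxD)
    · show x + (u k - x) ∈ D
      simpa using hu k
    · rw [tendsto_subtype_rng]
      exact hut.sub tendsto_const_nhds
  have hmem : (1 - t) • (0 : ↥(vectorSpan ℝ D)) + t • ⟨y - x, hyx⟩ ∈ interior s :=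
    hsconv.combo_interior_closure_mem_interior h0 hycl (by linarith) ht0 (by ring)
  have hts : t • (⟨y - x, hyx⟩ : ↥(vectorSpan ℝ D)) ∈ s := by
    have := interior_subset hmem
    rwa [smul_zero, zero_add] at this
  have h2 : x + ↑(t • (⟨y - x, hyx⟩ : ↥(vectorSpan ℝ D))) ∈ D := hts
  rwa [Submodule.coe_smul] at h2
private lemma aux_exists_proper_face {F : Set (Fin n → ℝ)} (hFne : F.Nonempty)
    (hFconv : Convex ℝ F) {x} (hx : x ∈ F) (hxn : x ∉ intrinsicInterior ℝ F) :
    ∃ G, IsFaceOf n F G ∧ x ∈ G ∧ G ≠ F ∧ (IsClosed F → IsClosed G) := by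
  classical
  set W := vectorSpan ℝ F with hWdef
  set s : Set ↥W := {w | x + ↑w ∈ F} with hsdef
  have hsconv : Convex ℝ s := aux_chart_convex hFconv
  obtain ⟨z, hz⟩ := Set.Nonempty.intrinsicInterior hFconv hFne
  have hzF : z ∈ F := intrinsicInterior_subset hz
  have hzx : z - x ∈ W := vsub_mem_vectorSpan ℝ hzF hx
  have hu : (⟨z - x, hzx⟩ : ↥W) ∈ interior s := by
    apply aux_chart_interior hx
    rw [show x + (z - x) = z by abel]
    exact hz
  have h0s : (0 : ↥W) ∈ s := by
    show x + ↑(0 : ↥W) ∈ F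
    rwa [ZeroMemClass.coe_zero, add_zero]
  have h0ni : (0 : ↥W) ∉ interior s := by
    intro h
    apply hxn
    have := aux_chart_relint hx 0 h
    rwa [ZeroMemClass.coe_zero, add_zero] at this
  obtain ⟨ℓ₀, hℓ₀⟩ := geometric_hahn_banach_open_point (hsconv.interior) isOpen_interior h0ni
  rw [map_zero] at hℓ₀
  -- ℓ₀ ≤ 0 on s
  have hle : ∀ a ∈ s, ℓ₀ a ≤ 0 := by
    intro a ha
    have hseq : Filter.Tendsto
        (fun k : ℕ => ℓ₀ ((1 / (k + 1 : ℝ)) • (⟨z - x, hzx⟩ : ↥W) + (1 - 1 / (k + 1 : ℝ)) • a))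
        Filter.atTop (nhds (ℓ₀ ((0 : ℝ) • (⟨z - x, hzx⟩ : ↥W) + (1 - (0:ℝ)) • a))) := by
      apply (ℓ₀.continuous.tendsto _).comp
      have h1 : Filter.Tendsto (fun k : ℕ => 1 / (k + 1 : ℝ)) Filter.atTop (nhds 0) :=
        tendsto_one_div_add_atTop_nhds_zero_nat
      exact (h1.smul_const _).add ((tendsto_const_nhds.sub h1).smul_const a)
    rw [zero_smul, sub_zero, one_smul, zero_add] at hseq
    apply le_of_tendsto hseq
    apply Filter.Eventually.of_forall
    intro k
    have hk1 : 0 < 1 / (k + 1 : ℝ) := by positivity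
    have hk2 : 1 / (k + 1 : ℝ) ≤ 1 := by
      rw [div_le_one (by positivity)]; linarith [Nat.cast_nonneg (α := ℝ) k]
    have := hℓ₀ _ (hsconv.combo_interior_closure_mem_interior (b := 1 - 1 / (k + 1 : ℝ)) hu
      (subset_closure ha) hk1 (by linarith) (by ring))
    exact this.le
  -- extend ℓ₀ to the ambient space
  obtain ⟨ℓ, hmax, hltz⟩ : ∃ ℓ : (Fin n → ℝ) →ₗ[ℝ] ℝ,
      (∀ y ∈ F, ℓ y ≤ ℓ x) ∧ ℓ z < ℓ x := by
    obtain ⟨W', hWc⟩ := Submodule.exists_isCompl W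
    refine ⟨ℓ₀.toLinearMap.comp (W.projectionOnto W' hWc), ?_, ?_⟩
    · intro y hy
      have hyx : y - x ∈ W := vsub_mem_vectorSpan ℝ hy hx
      have hys : (⟨y - x, hyx⟩ : ↥W) ∈ s := by
        show x + (y - x) ∈ F
        rwa [show x + (y - x) = y by abel]
      have hcoe : y - x = ((⟨y - x, hyx⟩ : ↥W) : Fin n → ℝ) := rfl
      have h2 : ℓ₀.toLinearMap.comp (W.projectionOnto W' hWc) (y - x) ≤ 0 := by
        rw [hcoe]
        show ℓ₀ (W.projectionOnto W' hWc ↑(⟨y - x, hyx⟩ : ↥W)) ≤ 0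
        rw [Submodule.projectionOnto_apply_left]
        exact hle _ hys
      rw [map_sub] at h2
      linarith
    · have h2 : ℓ₀.toLinearMap.comp (W.projectionOnto W' hWc) (z - x) < 0 := by
        have hcoe : z - x = ((⟨z - x, hzx⟩ : ↥W) : Fin n → ℝ) := rfl
        rw [hcoe]
        show ℓ₀ (W.projectionOnto W' hWc ↑(⟨z - x, hzx⟩ : ↥W)) < 0
        rw [Submodule.projectionOnto_apply_left]
        exact hℓ₀ _ hu
      rw [map_sub] at h2
      linarith
  refine ⟨F ∩ {y | ℓ y = ℓ x}, ⟨hFconv.inter (convex_hyperplane ℓ.isLinear _), ?_⟩,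
    ⟨hx, rfl⟩, ?_, fun hcl => hcl.inter (isClosed_eq (LinearMap.continuous_of_finiteDimensional ℓ)
      continuous_const)⟩
  · refine ⟨inter_subset_left, ?_⟩
    rintro x1 hx1 x2 hx2 y ⟨hyF, hyl⟩ ⟨a, b, ha, hb, hab, habe⟩
    have hv : a * ℓ x1 + b * ℓ x2 = ℓ x := by
      have := congrArg ℓ habe
      rwa [map_add, map_smul, map_smul, smul_eq_mul, smul_eq_mul, hyl] at this
    have h1 := hmax x1 hx1
    have h2 := hmax x2 hx2
    have hb2 : b * ℓ x2 ≤ b * ℓ x := mul_le_mul_of_nonneg_left h2 hb.le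
    have ha2 : a * ℓ x1 ≤ a * ℓ x := mul_le_mul_of_nonneg_left h1 ha.le
    have hx3 : a * ℓ x + b * ℓ x = ℓ x := by rw [← add_mul, hab, one_mul]
    have he1 : ℓ x1 = ℓ x := by
      refine le_antisymm h1 ?_
      have : a * ℓ x ≤ a * ℓ x1 := by linarith
      exact le_of_mul_le_mul_left this ha
    have he2 : ℓ x2 = ℓ x := by
      refine le_antisymm h2 ?_
      have : b * ℓ x ≤ b * ℓ x2 := by linarith
      exact le_of_mul_le_mul_left this hb
    exact ⟨hx1, he1⟩
  · intro heq
    have hzG : z ∈ F ∩ {y | ℓ y = ℓ x} := heq.symm ▸ hzF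
    exact absurd hzG.2 (ne_of_lt hltz)

private lemma aux_dim_lt {F G : Set (Fin n → ℝ)} (hFconv : Convex ℝ F) (hG : IsFaceOf n F G)
    (hGne : G.Nonempty) (hne : G ≠ F) : setDim n G < setDim n F := by
  have hsub : G ⊆ F := hG.2.1
  have hle : vectorSpan ℝ G ≤ vectorSpan ℝ F := vectorSpan_mono ℝ hsub
  refine lt_of_le_of_ne (Submodule.finrank_mono hle) fun heq => ?_
  have hspan : vectorSpan ℝ G = vectorSpan ℝ F := Submodule.eq_of_le_of_finrank_eq hle heq
  obtain ⟨g, hg⟩ := hGne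
  have hAset : (affineSpan ℝ G : Set (Fin n → ℝ)) = (affineSpan ℝ F : Set (Fin n → ℝ)) := by
    apply Subset.antisymm
    · exact fun a ha => affineSpan_mono ℝ hsub ha
    · intro a ha
      have hdir : a - g ∈ (affineSpan ℝ G).direction := by
        rw [direction_affineSpan, hspan, ← direction_affineSpan]
        exact AffineSubspace.vsub_mem_direction ha (subset_affineSpan ℝ F (hsub hg))
      have := AffineSubspace.vadd_mem_of_mem_direction hdir (subset_affineSpan ℝ G hg)
      simpa [vadd_eq_add, sub_add_cancel] using this
  obtain ⟨z, hzr⟩ := Set.Nonempty.intrinsicInterior hG.1 ⟨g, hg⟩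
  have hzF : z ∈ intrinsicInterior ℝ F := by
    rw [aux_mem_relint] at hzr ⊢
    obtain ⟨hzA, ε, hε, hb⟩ := hzr
    have hzA' : z ∈ affineSpan ℝ F := by
      have : z ∈ (affineSpan ℝ F : Set (Fin n → ℝ)) := by rw [← hAset]; exact hzA
      exact this
    refine ⟨hzA', ε, hε, fun y hy hd => ?_⟩
    refine hsub (hb y ?_ hd)
    rw [hAset]
    exact hy
  exact hne (Subset.antisymm hsub (aux_eq_of_mem_relint hG.2 (intrinsicInterior_subset hzr) hzF))

private lemma aux_relint_convex {F : Set (Fin n → ℝ)} (hF : Convex ℝ F) :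
    Convex ℝ (intrinsicInterior ℝ F) := by
  intro a ha b hb p q hp hq hpq
  rw [aux_mem_relint] at ha hb ⊢
  obtain ⟨haA, ε1, hε1, h1⟩ := ha
  obtain ⟨hbA, ε2, hε2, h2⟩ := hb
  have hcombA : p • a + q • b ∈ affineSpan ℝ F := by
    have hdir : q • (b - a) ∈ (affineSpan ℝ F).direction :=
      Submodule.smul_mem _ _ (AffineSubspace.vsub_mem_direction hbA haA)
    have := AffineSubspace.vadd_mem_of_mem_direction hdir haA
    have hp' : p = 1 - q := by linarith
    have heq : q • (b - a) +ᵥ a = p • a + q • b := by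
      rw [vadd_eq_add, hp', smul_sub, sub_smul, one_smul]
      abel
    rwa [heq] at this
  refine ⟨hcombA, min ε1 ε2, lt_min hε1 hε2, fun y hy hd => ?_⟩
  set v := y - (p • a + q • b) with hvdef
  have hvdir : v ∈ (affineSpan ℝ F).direction := AffineSubspace.vsub_mem_direction hy hcombA
  have ha' : a + v ∈ F := by
    apply h1
    · have := AffineSubspace.vadd_mem_of_mem_direction hvdir haA
      rwa [vadd_eq_add, add_comm] at this
    · rw [dist_eq_norm, add_sub_cancel_left]
      calc ‖v‖ = dist y (p • a + q • b) := by rw [dist_eq_norm, hvdef]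
        _ < min ε1 ε2 := hd
        _ ≤ ε1 := min_le_left _ _
  have hb' : b + v ∈ F := by
    apply h2
    · have := AffineSubspace.vadd_mem_of_mem_direction hvdir hbA
      rwa [vadd_eq_add, add_comm] at this
    · rw [dist_eq_norm, add_sub_cancel_left]
      calc ‖v‖ = dist y (p • a + q • b) := by rw [dist_eq_norm, hvdef]
        _ < min ε1 ε2 := hd
        _ ≤ ε2 := min_le_right _ _
  have hcomb := hF ha' hb' hp hq hpq
  have hv1 : p • v + q • v = v := by rw [← add_smul, hpq, one_smul]
  have heq : p • (a + v) + q • (b + v) = y := by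
    calc p • (a + v) + q • (b + v) = (p • a + q • b) + (p • v + q • v) := by
          rw [smul_add, smul_add]; abel
      _ = (p • a + q • b) + v := by rw [hv1]
      _ = y := by rw [hvdef]; abel
  rwa [heq] at hcomb
open scoped NNReal

private lemma aux_lip_closure {f : (Fin n → ℝ) → (Fin n → ℝ)} {s : Set (Fin n → ℝ)} {c : ℝ≥0}
    (hf : LipschitzOnWith c f s) (hcont : ContinuousOn f (closure s)) :
    LipschitzOnWith c f (closure s) := by
  rw [lipschitzOnWith_iff_dist_le_mul] at hf ⊢
  intro x hx y hy
  obtain ⟨u, hu, hux⟩ := mem_closure_iff_seq_limit.1 hx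
  obtain ⟨v, hv, hvy⟩ := mem_closure_iff_seq_limit.1 hy
  have h1 : Filter.Tendsto (fun k => f (u k)) Filter.atTop (nhds (f x)) :=
    (hcont x hx).tendsto.comp (tendsto_nhdsWithin_of_tendsto_nhds_of_eventually_within u hux
      (Filter.Eventually.of_forall fun k => subset_closure (hu k)))
  have h2 : Filter.Tendsto (fun k => f (v k)) Filter.atTop (nhds (f y)) :=
    (hcont y hy).tendsto.comp (tendsto_nhdsWithin_of_tendsto_nhds_of_eventually_within v hvy
      (Filter.Eventually.of_forall fun k => subset_closure (hv k)))
  refine le_of_tendsto_of_tendsto' (h1.dist h2) ((hux.dist hvy).const_mul (c : ℝ)) fun k =>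
    hf _ (hu k) _ (hv k)

private lemma aux_smul_lip {F : Set (Fin n → ℝ)} {c : ℝ≥0} {f : (Fin n → ℝ) → (Fin n → ℝ)}
    (hf : LipschitzOnWith c f F) {t : ℝ} (ht0 : 0 ≤ t) (ht1 : t ≤ 1) :
    LipschitzOnWith c (fun x => t • f x) F := by
  rw [lipschitzOnWith_iff_dist_le_mul] at hf ⊢
  intro a ha b hb
  rw [dist_smul₀]
  calc ‖t‖ * dist (f a) (f b) ≤ 1 * ((c : ℝ) * dist a b) := by
        apply mul_le_mul _ (hf a ha b hb) dist_nonneg zero_le_one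
        rwa [Real.norm_eq_abs, abs_of_nonneg ht0]
    _ = (c : ℝ) * dist a b := one_mul _

private lemma aux_inj {F : Set (Fin n → ℝ)} {c : ℝ≥0} (hc : (c : ℝ) < 1)
    {f : (Fin n → ℝ) → (Fin n → ℝ)} (hf : LipschitzOnWith c f F) :
    Set.InjOn (fun x => x + f x) F := by
  intro a ha b hb hab
  by_contra hne
  simp only at hab
  have h2 : a - b = f b - f a := sub_eq_sub_iff_add_eq_add.2 (hab.trans (add_comm _ _))
  have h3 : dist a b ≤ (c : ℝ) * dist a b := by
    have hd := lipschitzOnWith_iff_dist_le_mul.1 hf b hb a ha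
    calc dist a b = dist (f b) (f a) := by rw [dist_eq_norm, dist_eq_norm, h2]
      _ ≤ (c : ℝ) * dist b a := hd
      _ = (c : ℝ) * dist a b := by rw [dist_comm]
  nlinarith [dist_pos.2 hne]

private lemma aux_banach {F : Set (Fin n → ℝ)} {c : ℝ≥0} (hc : (c : ℝ) < 1)
    {f : (Fin n → ℝ) → (Fin n → ℝ)} (hf : LipschitzOnWith c f F)
    (hdir : ∀ x ∈ F, f x ∈ vectorSpan ℝ F) {x₀ : Fin n → ℝ} (hx₀ : x₀ ∈ F) {r : ℝ}
    (hr : 0 < r) (hball : ∀ z ∈ (affineSpan ℝ F : Set (Fin n → ℝ)), dist z x₀ ≤ r → z ∈ F)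
    {y : Fin n → ℝ} (hy : y ∈ affineSpan ℝ F) (hyd : dist y (x₀ + f x₀) ≤ (1 - (c : ℝ)) * r) :
    ∃ x ∈ F, dist x x₀ ≤ r ∧ x + f x = y := by
  classical
  haveI : Nonempty ↥(affineSpan ℝ F) := ⟨⟨x₀, subset_affineSpan ℝ F hx₀⟩⟩
  have hd := lipschitzOnWith_iff_dist_le_mul.1 hf
  set K : Set (Fin n → ℝ) := (affineSpan ℝ F : Set (Fin n → ℝ)) ∩ Metric.closedBall x₀ r
    with hKdef
  have hKF : ∀ z ∈ K, z ∈ F := fun z hz => hball z hz.1 (Metric.mem_closedBall.1 hz.2)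
  have hKcl : IsClosed K :=
    (AffineSubspace.closed_of_finiteDimensional _).inter Metric.isClosed_closedBall
  haveI : Nonempty ↥K := ⟨⟨x₀, ⟨subset_affineSpan ℝ F hx₀, by
    simp [Metric.mem_closedBall, hr.le]⟩⟩⟩
  haveI : CompleteSpace ↥K := hKcl.completeSpace_coe
  have hmem : ∀ a : ↥K, y - f ↑a ∈ K := by
    intro a
    have haF : (a : Fin n → ℝ) ∈ F := hKF _ a.2
    constructor
    · have hdir' : -(f ↑a) ∈ (affineSpan ℝ F).direction := by
        rw [direction_affineSpan]
        exact neg_mem (hdir _ haF)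
      have := AffineSubspace.vadd_mem_of_mem_direction hdir' hy
      rwa [vadd_eq_add, add_comm, ← sub_eq_add_neg] at this
    · rw [Metric.mem_closedBall]
      have hsplit : y - f ↑a - x₀ = (y - (x₀ + f x₀)) + (f x₀ - f ↑a) := by abel
      have h1 : dist (f x₀) (f ↑a) ≤ (c : ℝ) * r := by
        calc dist (f x₀) (f ↑a) ≤ (c : ℝ) * dist x₀ ↑a := hd _ hx₀ _ haF
          _ ≤ (c : ℝ) * r := by
              apply mul_le_mul_of_nonneg_left _ c.coe_nonneg
              rw [dist_comm]
              exact Metric.mem_closedBall.1 a.2.2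
      calc dist (y - f ↑a) x₀ = ‖(y - (x₀ + f x₀)) + (f x₀ - f ↑a)‖ := by
            rw [dist_eq_norm, hsplit]
        _ ≤ ‖y - (x₀ + f x₀)‖ + ‖f x₀ - f ↑a‖ := norm_add_le _ _
        _ ≤ (1 - (c : ℝ)) * r + (c : ℝ) * r := by
            apply add_le_add
            · rw [← dist_eq_norm]; exact hyd
            · rw [← dist_eq_norm]; exact h1
        _ = r := by ring
  set T : ↥K → ↥K := fun a => ⟨y - f ↑a, hmem a⟩ with hTdef
  have hcnn : c < 1 := by exact_mod_cast hc
  have hCT : ContractingWith c T := by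
    refine ⟨hcnn, LipschitzWith.of_dist_le_mul fun a b => ?_⟩
    have : dist (T a) (T b) = dist (f ↑a) (f ↑b) := by
      rw [Subtype.dist_eq]
      show dist (y - f ↑a) (y - f ↑b) = _
      rw [dist_sub_left]
    rw [this, Subtype.dist_eq]
    exact hd _ (hKF _ a.2) _ (hKF _ b.2)
  let p := ContractingWith.fixedPoint T hCT
  have hfix : T p = p := hCT.fixedPoint_isFixedPt
  have hco : y - f ↑p = ↑p := congrArg Subtype.val hfix
  exact ⟨↑p, hKF _ p.2, Metric.mem_closedBall.1 p.2.2, (sub_eq_iff_eq_add.1 hco).symm⟩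
private lemma aux_main (c : ℝ≥0) (hc : (c : ℝ) < 1) :
    ∀ d : ℕ, ∀ F : Set (Fin n → ℝ), F.Nonempty → Convex ℝ F → IsCompact F → setDim n F ≤ d →
      ∀ f : (Fin n → ℝ) → (Fin n → ℝ), LipschitzOnWith c f F →
        (∀ x ∈ F, f x ∈ spanAt n F x) → (fun x => x + f x) '' F = F := by
  intro d
  induction d using Nat.strong_induction_on with
  | _ d IH =>
  intro F hFne hFconv hFcomp hFdim f hlip hstr
  classical
  have hdirF : ∀ x ∈ F, f x ∈ (affineSpan ℝ F).direction := fun x hx => by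
    rw [direction_affineSpan]
    exact aux_spanAt_le hFconv hx (hstr x hx)
  have hfaces : ∀ t : ℝ, 0 ≤ t → t ≤ 1 → ∀ G, IsFaceOf n F G → G ≠ F → IsClosed G →
      G.Nonempty → (fun x => x + t • f x) '' G = G := by
    intro t ht0 ht1 G hG hne hcl hGne
    have hdim : setDim n G < d := lt_of_lt_of_le (aux_dim_lt hFconv hG hGne hne) hFdim
    exact IH _ hdim G hGne hG.1 (hFcomp.of_isClosed_subset hcl hG.2.1) le_rfl _
      ((aux_smul_lip hlip ht0 ht1).mono hG.2.1)
      (fun x hx => Submodule.smul_mem _ t (aux_spanAt_mono hG hx (hstr x (hG.2.1 hx))))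
  have hfr : ∀ x ∈ F, x ∉ intrinsicInterior ℝ F → ∃ G, IsFaceOf n F G ∧ x ∈ G ∧ G ≠ F ∧
      IsClosed G ∧ G ∩ intrinsicInterior ℝ F = ∅ ∧ G.Nonempty := by
    intro x hx hxn
    obtain ⟨G, hG, hxG, hne, hclf⟩ := aux_exists_proper_face hFne hFconv hx hxn
    refine ⟨G, hG, hxG, hne, hclf hFcomp.isClosed, ?_, ⟨x, hxG⟩⟩
    rw [eq_empty_iff_forall_notMem]
    rintro z ⟨hz1, hz2⟩
    exact hne (Subset.antisymm hG.2.1 (aux_eq_of_mem_relint hG.2 hz1 hz2))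
  haveI hAne : Nonempty ↥(affineSpan ℝ F) :=
    ⟨⟨hFne.some, subset_affineSpan ℝ F hFne.some_mem⟩⟩
  have hmapsr : ∀ t : ℝ, 0 ≤ t → t ≤ 1 → ∀ x ∈ intrinsicInterior ℝ F,
      x + t • f x ∈ intrinsicInterior ℝ F := by
    intro t₁ ht₁0 ht₁1 x hx
    have hxF : x ∈ F := intrinsicInterior_subset hx
    have hmemA : ∀ s : ℝ, x + s • f x ∈ affineSpan ℝ F := by
      intro s
      have hdir : s • f x ∈ (affineSpan ℝ F).direction :=
        Submodule.smul_mem _ _ (hdirF x hxF)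
      have := AffineSubspace.vadd_mem_of_mem_direction hdir (subset_affineSpan ℝ F hxF)
      rwa [vadd_eq_add, add_comm] at this
    set g : ℝ → ↥(affineSpan ℝ F) := fun s => ⟨x + s • f x, hmemA s⟩ with hgdef
    have hgc : Continuous g :=
      Continuous.subtype_mk (continuous_const.add (continuous_id.smul continuous_const)) _
    set V₁ : Set ↥(affineSpan ℝ F) := Subtype.val ⁻¹' (intrinsicInterior ℝ F) with hV₁def
    have hV₁ : IsOpen V₁ := by
      have heq : V₁ = interior (Subtype.val ⁻¹' F) := by
        rw [hV₁def]
        simp only [intrinsicInterior]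
        exact preimage_image_eq _ Subtype.val_injective
      rw [heq]; exact isOpen_interior
    set V₂ : Set ↥(affineSpan ℝ F) := (Subtype.val ⁻¹' F)ᶜ with hV₂def
    have hV₂ : IsOpen V₂ := (hFcomp.isClosed.preimage continuous_subtype_val).isOpen_compl
    have hdisj : Disjoint V₁ V₂ := by
      rw [Set.disjoint_left]
      intro z h1 h2
      have h1' : (↑z : Fin n → ℝ) ∈ intrinsicInterior ℝ F := h1
      have h1'' : (↑z : Fin n → ℝ) ∈ F := intrinsicInterior_subset h1'
      exact h2 h1''
    have hcover : g '' (Icc 0 t₁) ⊆ V₁ ∪ V₂ := by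
      rintro _ ⟨s, hs, rfl⟩
      by_cases hmem : x + s • f x ∈ F
      · left
        show x + s • f x ∈ intrinsicInterior ℝ F
        by_contra hni
        obtain ⟨G, hG, hxG, hneG, hclG, hdisjG, hGne⟩ := hfr _ hmem hni
        have himg := hfaces s hs.1 (le_trans hs.2 ht₁1) G hG hneG hclG hGne
        rw [← himg] at hxG
        obtain ⟨gpt, hgpt, heqg⟩ := hxG
        have hginj := aux_inj hc (aux_smul_lip hlip hs.1 (le_trans hs.2 ht₁1))
        have hgx : gpt = x := hginj (hG.2.1 hgpt) hxF heqg
        rw [hgx] at hgpt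
        have hmm : x ∈ G ∩ intrinsicInterior ℝ F := ⟨hgpt, hx⟩
        rw [hdisjG] at hmm
        exact hmm
      · right; exact hmem
    have hpre : IsPreconnected (g '' Icc 0 t₁) := (isPreconnected_Icc).image g hgc.continuousOn
    have hne0 : (g '' Icc 0 t₁ ∩ V₁).Nonempty := by
      refine ⟨g 0, mem_image_of_mem g (left_mem_Icc.2 ht₁0), ?_⟩
      show x + (0:ℝ) • f x ∈ intrinsicInterior ℝ F
      rwa [zero_smul, add_zero]
    have hsub := hpre.subset_left_of_subset_union hV₁ hV₂ hdisj hcover hne0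
    exact hsub (mem_image_of_mem g (right_mem_Icc.2 ht₁0))
  have hφc : ContinuousOn (fun x => x + f x) F := continuousOn_id.add hlip.continuousOn
  have hopen : ∀ y₀ ∈ (fun x => x + f x) '' (intrinsicInterior ℝ F), ∃ δ > 0,
      ∀ y ∈ (affineSpan ℝ F : Set (Fin n → ℝ)), dist y y₀ < δ →
        y ∈ (fun x => x + f x) '' (intrinsicInterior ℝ F) := by
    rintro _ ⟨x₀, hx₀, rfl⟩
    obtain ⟨hx₀A, ε, hε, hball⟩ := aux_mem_relint.1 hx₀
    have hx₀F : x₀ ∈ F := intrinsicInterior_subset hx₀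
    refine ⟨(1 - (c:ℝ)) * (ε / 2), mul_pos (by linarith) (half_pos hε), ?_⟩
    intro y hyA hyd
    obtain ⟨x, hxF, hxd, hxe⟩ := aux_banach hc hlip
      (fun z hz => aux_spanAt_le hFconv hz (hstr z hz)) hx₀F (half_pos hε)
      (fun z hz hd => hball z hz (lt_of_le_of_lt hd (half_lt_self hε))) hyA hyd.le
    refine ⟨x, ?_, hxe⟩
    rw [aux_mem_relint]
    refine ⟨subset_affineSpan ℝ F hxF, ε / 2, half_pos hε, fun z hz hd => ?_⟩
    apply hball z hz
    calc dist z x₀ ≤ dist z x + dist x x₀ := dist_triangle _ _ _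
      _ < ε / 2 + ε / 2 := add_lt_add_of_lt_of_le hd hxd
      _ = ε := by ring
  have himg_relint : (fun x => x + f x) '' (intrinsicInterior ℝ F) =
      intrinsicInterior ℝ F := by
    apply Subset.antisymm
    · rintro _ ⟨x, hx, rfl⟩
      have := hmapsr 1 zero_le_one le_rfl x hx
      rwa [one_smul] at this
    · set V₁ : Set ↥(affineSpan ℝ F) := Subtype.val ⁻¹' (intrinsicInterior ℝ F) with hV₁def
      set I := (fun x => x + f x) '' (intrinsicInterior ℝ F) with hIdef
      set U : Set ↥(affineSpan ℝ F) := Subtype.val ⁻¹' I with hUdef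
      set Wo : Set ↥(affineSpan ℝ F) := Subtype.val ⁻¹' (closure I)ᶜ with hWodef
      have hUopen : IsOpen U := by
        rw [Metric.isOpen_iff]
        rintro yhat hyhat
        obtain ⟨δ, hδ, h⟩ := hopen _ hyhat
        refine ⟨δ, hδ, fun zhat hz => ?_⟩
        rw [Metric.mem_ball, Subtype.dist_eq] at hz
        exact h _ zhat.2 hz
      have hWopen : IsOpen Wo :=
        (isOpen_compl_iff.2 isClosed_closure).preimage continuous_subtype_val
      have hdisjUW : Disjoint U Wo := by
        rw [Set.disjoint_left]
        intro z h1 h2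
        have h1' : (↑z : Fin n → ℝ) ∈ I := h1
        exact h2 (subset_closure h1')
      have hcover : V₁ ⊆ U ∪ Wo := by
        intro zhat hz
        by_cases hcl : (zhat : Fin n → ℝ) ∈ closure I
        · left
          obtain ⟨u, hu, hut⟩ := mem_closure_iff_seq_limit.1 hcl
          choose xs hxs hxe using hu
          obtain ⟨x, hxF, κ, hκmono, hκt⟩ := hFcomp.tendsto_subseq
            (fun k => intrinsicInterior_subset (hxs k))
          have h1 : Filter.Tendsto (fun i => xs (κ i) + f (xs (κ i))) Filter.atTop
              (nhds (x + f x)) :=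
            (hφc x hxF).tendsto.comp (tendsto_nhdsWithin_of_tendsto_nhds_of_eventually_within _
              hκt (Filter.Eventually.of_forall fun i => intrinsicInterior_subset (hxs (κ i))))
          have h2 : Filter.Tendsto (fun i => xs (κ i) + f (xs (κ i))) Filter.atTop
              (nhds ↑zhat) :=
            (hut.comp hκmono.tendsto_atTop).congr fun i => (hxe (κ i)).symm
          have hφx : x + f x = ↑zhat := tendsto_nhds_unique h1 h2
          have hxr : x ∈ intrinsicInterior ℝ F := by
            by_contra hxn
            obtain ⟨G, hG, hxG, hneG, hclG, hdisjG, hGne⟩ := hfr x hxF hxn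
            have himg := hfaces 1 zero_le_one le_rfl G hG hneG hclG hGne
            have hmemG : x + f x ∈ G := by
              rw [← himg]
              exact ⟨x, hxG, by simp⟩
            rw [hφx] at hmemG
            have hmm : (zhat : Fin n → ℝ) ∈ G ∩ intrinsicInterior ℝ F := ⟨hmemG, hz⟩
            rw [hdisjG] at hmm
            exact hmm
          exact ⟨x, hxr, hφx⟩
        · right; exact hcl
      have hpre : IsPreconnected V₁ := by
        have h1 : Subtype.val '' V₁ = intrinsicInterior ℝ F := by
          apply image_preimage_eq_of_subset
          intro z hz
          rw [Subtype.range_val]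
          exact subset_affineSpan ℝ F (intrinsicInterior_subset hz)
        have h2 : IsPreconnected (Subtype.val '' V₁) :=
          h1.symm ▸ (aux_relint_convex hFconv).isPreconnected
        exact (Topology.IsInducing.subtypeVal).isPreconnected_image.1 h2
      obtain ⟨x₀, hx₀⟩ := Set.Nonempty.intrinsicInterior hFconv hFne
      have hx₀' : x₀ + f x₀ ∈ intrinsicInterior ℝ F := by
        have := hmapsr 1 zero_le_one le_rfl x₀ hx₀
        rwa [one_smul] at this
      have hne0 : (V₁ ∩ U).Nonempty :=
        ⟨⟨x₀ + f x₀, subset_affineSpan ℝ F (intrinsicInterior_subset hx₀')⟩, hx₀',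
          ⟨x₀, hx₀, rfl⟩⟩
      have hsub := hpre.subset_left_of_subset_union hUopen hWopen hdisjUW hcover hne0
      intro z hz
      have hzA : z ∈ affineSpan ℝ F := subset_affineSpan ℝ F (intrinsicInterior_subset hz)
      have hzV : (⟨z, hzA⟩ : ↥(affineSpan ℝ F)) ∈ V₁ := hz
      exact hsub hzV
  have hbd : (fun x => x + f x) '' (F \ intrinsicInterior ℝ F) =
      F \ intrinsicInterior ℝ F := by
    apply Subset.antisymm
    · rintro _ ⟨x, ⟨hxF, hxn⟩, rfl⟩
      obtain ⟨G, hG, hxG, hneG, hclG, hdisjG, hGne⟩ := hfr x hxF hxn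
      have himg := hfaces 1 zero_le_one le_rfl G hG hneG hclG hGne
      have hmemG : x + f x ∈ G := by
        rw [← himg]
        exact ⟨x, hxG, by simp⟩
      refine ⟨hG.2.1 hmemG, fun hr => ?_⟩
      have hmm : x + f x ∈ G ∩ intrinsicInterior ℝ F := ⟨hmemG, hr⟩
      rw [hdisjG] at hmm
      exact hmm
    · rintro y ⟨hyF, hyn⟩
      obtain ⟨G, hG, hyG, hneG, hclG, hdisjG, hGne⟩ := hfr y hyF hyn
      have himg := hfaces 1 zero_le_one le_rfl G hG hneG hclG hGne
      rw [← himg] at hyG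
      obtain ⟨gpt, hg, he⟩ := hyG
      simp only [one_smul] at he
      refine ⟨gpt, ⟨hG.2.1 hg, fun hr => ?_⟩, he⟩
      have hmm : gpt ∈ G ∩ intrinsicInterior ℝ F := ⟨hg, hr⟩
      rw [hdisjG] at hmm
      exact hmm
  calc (fun x => x + f x) '' F
      = ((fun x => x + f x) '' intrinsicInterior ℝ F) ∪
        ((fun x => x + f x) '' (F \ intrinsicInterior ℝ F)) := by
        rw [← image_union, union_diff_cancel intrinsicInterior_subset]
    _ = intrinsicInterior ℝ F ∪ (F \ intrinsicInterior ℝ F) := by rw [himg_relint, hbd]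
    _ = F := union_diff_cancel intrinsicInterior_subset
private lemma aux_relint_smallest {M : Set (Fin n → ℝ)} (hM : Convex ℝ M) {x} (hx : x ∈ M) :
    x ∈ intrinsicInterior ℝ (smallestFace n M x) := by
  obtain ⟨hDface, hxD⟩ := aux_smallestFace_isFace hM hx
  by_contra hxn
  obtain ⟨G, hG, hxG, hne, -⟩ := aux_exists_proper_face ⟨x, hxD⟩ hDface.1 hxD hxn
  exact hne (Subset.antisymm hG.2.1 (aux_smallestFace_subset (aux_trans hDface hG) hxG))

private lemma aux_relint_closure {D : Set (Fin n → ℝ)} {x} (hne : D.Nonempty)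
    (hx : x ∈ intrinsicInterior ℝ D) : x ∈ intrinsicInterior ℝ (closure D) := by
  haveI : Nonempty ↥(affineSpan ℝ D) :=
    ⟨⟨hne.some, subset_affineSpan ℝ D hne.some_mem⟩⟩
  have hspan : (affineSpan ℝ (closure D) : Set (Fin n → ℝ)) =
      (affineSpan ℝ D : Set (Fin n → ℝ)) := by
    have h1 : affineSpan ℝ (closure D) ≤ affineSpan ℝ D := affineSpan_le.2
      (closure_minimal (subset_affineSpan ℝ D) (AffineSubspace.closed_of_finiteDimensional _))
    have h2 : affineSpan ℝ D ≤ affineSpan ℝ (closure D) := affineSpan_mono ℝ subset_closure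
    rw [le_antisymm h1 h2]
  rw [aux_mem_relint] at hx ⊢
  obtain ⟨hxA, ε, hε, hb⟩ := hx
  refine ⟨?_, ε, hε, fun y hy hd => ?_⟩
  · have : x ∈ (affineSpan ℝ (closure D) : Set (Fin n → ℝ)) := by rw [hspan]; exact hxA
    exact this
  · refine subset_closure (hb y ?_ hd)
    rw [← hspan]
    exact hy

private lemma aux_closure_face {M : Set (Fin n → ℝ)} (hM : Convex ℝ M) (hMcl : IsClosed M)
    {x} (hx : x ∈ M) : IsFaceOf n M (closure (smallestFace n M x)) := by
  obtain ⟨⟨hDconv, hDext⟩, hxD⟩ := aux_smallestFace_isFace hM hx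
  have hxr : x ∈ intrinsicInterior ℝ (smallestFace n M x) := aux_relint_smallest hM hx
  set D := smallestFace n M x with hDdef
  refine ⟨hDconv.closure, closure_minimal hDext.1 hMcl, ?_⟩
  rintro x1 hx1 x2 hx2 y hy ⟨a, b, ha, hb, hab, habe⟩
  have key : ∀ t : ℝ, 0 ≤ t → t < 1 → x + t • (x1 - x) ∈ D ∧ x + t • (x2 - x) ∈ D := by
    intro t ht0 ht1
    have hyt : x + t • (y - x) ∈ D := aux_combo hDconv hxr hy ht0 ht1
    have hb' : b = 1 - a := by linarith
    have hseg : x + t • (y - x) ∈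
        openSegment ℝ (x + t • (x1 - x)) (x + t • (x2 - x)) := by
      refine ⟨a, b, ha, hb, hab, ?_⟩
      rw [← habe, hb']
      have hexp : a • (x + t • (x1 - x)) + (1 - a) • (x + t • (x2 - x)) =
          x + t • ((a • x1 + (1 - a) • x2) - x) := by
        match_scalars <;> ring
      rw [hexp]
    have hx1M : x + t • (x1 - x) ∈ M := by
      have hcomb := hM hx hx1 (by linarith : (0:ℝ) ≤ 1 - t) ht0 (by ring)
      have : (1 - t) • x + t • x1 = x + t • (x1 - x) := by match_scalars <;> ring
      rwa [this] at hcomb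
    have hx2M : x + t • (x2 - x) ∈ M := by
      have hcomb := hM hx hx2 (by linarith : (0:ℝ) ≤ 1 - t) ht0 (by ring)
      have : (1 - t) • x + t • x2 = x + t • (x2 - x) := by match_scalars <;> ring
      rwa [this] at hcomb
    exact ⟨hDext.2 hx1M hx2M hyt hseg, hDext.right_mem_of_mem_openSegment hx1M hx2M hyt hseg⟩
  have hlim : ∀ w : Fin n → ℝ, Filter.Tendsto
      (fun k : ℕ => x + (1 - 1 / (k + 1 : ℝ)) • (w - x)) Filter.atTop (nhds w) := by
    intro w
    have h1 : Filter.Tendsto (fun k : ℕ => 1 - 1 / (k + 1 : ℝ)) Filter.atTop (nhds 1) := by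
      have := tendsto_one_div_add_atTop_nhds_zero_nat (𝕜 := ℝ)
      simpa using tendsto_const_nhds.sub this
    have h2 : Filter.Tendsto (fun k : ℕ => x + (1 - 1 / (k + 1 : ℝ)) • (w - x))
        Filter.atTop (nhds (x + (1 : ℝ) • (w - x))) :=
      tendsto_const_nhds.add (h1.smul_const _)
    have : x + (1:ℝ) • (w - x) = w := by match_scalars <;> ring
    rwa [this] at h2
  have hcond : ∀ k : ℕ, 0 ≤ 1 - 1 / (k + 1 : ℝ) ∧ 1 - 1 / (k + 1 : ℝ) < 1 := by
    intro k
    constructor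
    · have : 1 / (k + 1 : ℝ) ≤ 1 := by
        rw [div_le_one (by positivity)]
        linarith [Nat.cast_nonneg (α := ℝ) k]
      linarith
    · have : 0 < 1 / (k + 1 : ℝ) := by positivity
      linarith
  · exact mem_closure_of_tendsto (hlim x1) (Filter.Eventually.of_forall fun k =>
      (key _ (hcond k).1 (hcond k).2).1)
/-- Let `M ⊆ ℝⁿ` be a convex polytope with nonempty interior and
`f : M → ℝⁿ` a `C¹` stratified vector field (`f(x) ∈ E(x)` for all `x ∈ M`) with
`sup_{x∈M} ‖f'(x)‖ < 1`.  Then `φ := id_M + f` is a face-respecting homeomorphism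
of `M`: a bijection of `M` onto `M` with continuous inverse such that `φ(F) = F`
for every face `F` of `M`. -/
theorem stratified_contraction_is_face_respecting_homeo {n : ℕ} (M : Set (Fin n → ℝ))
    (hM : IsPolytope n M) (hMi : (interior M).Nonempty)
    (f : (Fin n → ℝ) → (Fin n → ℝ)) (f' : (Fin n → ℝ) → ((Fin n → ℝ) →L[ℝ] (Fin n → ℝ)))
    (hcont : ContinuousOn f M) (hcont' : ContinuousOn f' M)
    (hderiv : ∀ x ∈ interior M, HasFDerivAt f (f' x) x)
    (hsmall : ∃ c : ℝ, c < 1 ∧ ∀ x ∈ M, ‖f' x‖ ≤ c)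
    (hstr : ∀ x ∈ M, f x ∈ spanAt n M x) :
    Set.BijOn (fun x => x + f x) M M ∧
    (∃ ψ : (Fin n → ℝ) → (Fin n → ℝ),
        Set.InvOn ψ (fun x => x + f x) M M ∧ ContinuousOn ψ M) ∧
    (∀ F, IsFaceOf n M F → (fun x => x + f x) '' F = F) := by
  classical
  obtain ⟨S, hS⟩ := hM
  have hMconv : Convex ℝ M := hS ▸ convex_convexHull ℝ _
  have hMcomp : IsCompact M := hS ▸ S.finite_toSet.isCompact_convexHull ℝ
  have hMcl : IsClosed M := hMcomp.isClosed
  obtain ⟨x₀, hx₀⟩ := hMi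
  have hMne : M.Nonempty := ⟨x₀, interior_subset hx₀⟩
  obtain ⟨c₀, hc₀1, hc₀b⟩ := hsmall
  have hc₀0 : 0 ≤ c₀ := le_trans (norm_nonneg _) (hc₀b x₀ (interior_subset hx₀))
  set c : ℝ≥0 := ⟨c₀, hc₀0⟩ with hcdef
  have hcR : (c : ℝ) = c₀ := rfl
  have hc1 : (c : ℝ) < 1 := by rw [hcR]; exact hc₀1
  have hlipint : LipschitzOnWith c f (interior M) := by
    apply hMconv.interior.lipschitzOnWith_of_nnnorm_hasFDerivWithin_le
      (fun x hx => (hderiv x hx).hasFDerivWithinAt)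
    intro x hx
    rw [← NNReal.coe_le_coe]
    have := hc₀b x (interior_subset hx)
    simpa [hcR] using this
  have hMsub : M ⊆ closure (interior M) := by
    intro y hy
    have hseq : ∀ k : ℕ, (1/(k+1:ℝ)) • x₀ + (1 - 1/(k+1:ℝ)) • y ∈ interior M := by
      intro k
      apply hMconv.combo_interior_closure_mem_interior hx₀ (subset_closure hy) (by positivity)
      · have h : 1 / (k + 1 : ℝ) ≤ 1 := by
          rw [div_le_one (by positivity)]
          linarith [Nat.cast_nonneg (α := ℝ) k]
        linarith
      · ring
    have h1 : Filter.Tendsto (fun k : ℕ => 1/(k+1:ℝ)) Filter.atTop (nhds 0) :=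
      tendsto_one_div_add_atTop_nhds_zero_nat
    have h2 : Filter.Tendsto (fun k : ℕ => (1/(k+1:ℝ)) • x₀ + (1 - 1/(k+1:ℝ)) • y)
        Filter.atTop (nhds ((0:ℝ) • x₀ + (1 - (0:ℝ)) • y)) :=
      (h1.smul_const _).add ((tendsto_const_nhds.sub h1).smul_const _)
    rw [zero_smul, sub_zero, one_smul, zero_add] at h2
    exact mem_closure_of_tendsto h2 (Filter.Eventually.of_forall hseq)
  have hlipM : LipschitzOnWith c f M :=
    (aux_lip_closure hlipint (hcont.mono (closure_minimal interior_subset hMcl))).mono hMsub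
  set φ := fun x : Fin n → ℝ => x + f x with hφdef
  have hKey : ∀ F, IsFaceOf n M F → φ '' F = F := by
    intro F hF
    have hKs : ∀ x ∈ F, φ '' (closure (smallestFace n M x)) = closure (smallestFace n M x) ∧
        closure (smallestFace n M x) ⊆ F ∧ x ∈ closure (smallestFace n M x) := by
      intro x hxF
      have hxM : x ∈ M := hF.2.1 hxF
      have hKface : IsFaceOf n M (closure (smallestFace n M x)) :=
        aux_closure_face hMconv hMcl hxM
      have hxD : x ∈ smallestFace n M x := (aux_smallestFace_isFace hMconv hxM).2
      have hxK : x ∈ closure (smallestFace n M x) := subset_closure hxD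
      have hxrK : x ∈ intrinsicInterior ℝ (closure (smallestFace n M x)) :=
        aux_relint_closure ⟨x, hxD⟩ (aux_relint_smallest hMconv hxM)
      have hKsubF : closure (smallestFace n M x) ⊆ F := by
        have hFK : IsExtreme ℝ (closure (smallestFace n M x))
            (F ∩ closure (smallestFace n M x)) := by
          refine ⟨inter_subset_right, ?_⟩
          rintro x1 h1 x2 h2 y hyFK hseg
          have hx12 := hF.2.2 (hKface.2.1 h1) (hKface.2.1 h2) hyFK.1 hseg
          exact ⟨hx12, h1⟩
        intro w hw
        exact ((aux_eq_of_mem_relint hFK ⟨hxF, hxK⟩ hxrK) hw).1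
      have himg : φ '' (closure (smallestFace n M x)) = closure (smallestFace n M x) :=
        aux_main c hc1 (setDim n (closure (smallestFace n M x)))
          (closure (smallestFace n M x)) ⟨x, hxK⟩ hKface.1
          (hMcomp.of_isClosed_subset isClosed_closure hKface.2.1) le_rfl f
          (hlipM.mono hKface.2.1)
          (fun y hy => aux_spanAt_mono hKface hy (hstr y (hKface.2.1 hy)))
      exact ⟨himg, hKsubF, hxK⟩
    apply Subset.antisymm
    · rintro _ ⟨x, hxF, rfl⟩
      obtain ⟨himg, hsubF, hxK⟩ := hKs x hxF
      exact hsubF (himg ▸ mem_image_of_mem φ hxK)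
    · intro y hyF
      obtain ⟨himg, hsubF, hyK⟩ := hKs y hyF
      rw [← himg] at hyK
      obtain ⟨x, hxK, he⟩ := hyK
      exact ⟨x, hsubF hxK, he⟩
  have hMimg : φ '' M = M := hKey M (aux_face_self hMconv)
  have hinjM : Set.InjOn φ M := aux_inj hc1 hlipM
  have hbij : Set.BijOn φ M M := by
    refine ⟨fun x hx => hMimg ▸ mem_image_of_mem φ hx, hinjM, ?_⟩
    show M ⊆ φ '' M
    rw [hMimg]
  have hdistM := lipschitzOnWith_iff_dist_le_mul.1 hlipM
  haveI : Nonempty (Fin n → ℝ) := ⟨0⟩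
  refine ⟨hbij, ⟨Function.invFunOn φ M, hbij.invOn_invFunOn, ?_⟩, hKey⟩
  set ψ := Function.invFunOn φ M with hψdef
  have hinv : Set.InvOn ψ φ M M := hbij.invOn_invFunOn
  have hψmaps : Set.MapsTo ψ M M := hbij.surjOn.mapsTo_invFunOn
  rw [Metric.continuousOn_iff]
  intro y hy ε hε
  refine ⟨(1 - (c:ℝ)) * ε, mul_pos (by linarith) hε, fun y' hy' hd => ?_⟩
  have h1 : ψ y + f (ψ y) = y := hinv.2 hy
  have h2 : ψ y' + f (ψ y') = y' := hinv.2 hy'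
  have hm : ψ y ∈ M := hψmaps hy
  have hm' : ψ y' ∈ M := hψmaps hy'
  have hkey : dist (ψ y') (ψ y) ≤ dist y' y + (c:ℝ) * dist (ψ y') (ψ y) := by
    have hsplit : ψ y' - ψ y = (y' - y) + (f (ψ y) - f (ψ y')) := by
      linear_combination h2 - h1
    calc dist (ψ y') (ψ y) = ‖(y' - y) + (f (ψ y) - f (ψ y'))‖ := by
          rw [dist_eq_norm, hsplit]
      _ ≤ ‖y' - y‖ + ‖f (ψ y) - f (ψ y')‖ := norm_add_le _ _
      _ ≤ dist y' y + (c:ℝ) * dist (ψ y) (ψ y') := by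
          rw [← dist_eq_norm, ← dist_eq_norm]
          exact add_le_add_right (hdistM _ hm _ hm') _
      _ = dist y' y + (c:ℝ) * dist (ψ y') (ψ y) := by rw [dist_comm (ψ y)]
  nlinarith [dist_nonneg (x := ψ y') (y := ψ y)]
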